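/- arXiv:1105.2531 — 2 statements merged into one kernel-verified Lean document; each statement's English description precedes it below -/
import Mathlib

section
/- Let φ(t) = c·exp(1/(|t|-1)) on [-1,1] with ∫ φ = 1. For every M > 1 and every N ∈ ℕ there exists l > 0 such that for every interval I ⊆ [-1,1) with ℓ(I) ≤ l and every integer N' with 1 ≤ N' ≤ N: if ∫_{I+ℓ(I)} φ / ∫_I φ > M, then ∫_{I+(N'+1)ℓ(I)} φ / ∫_{I+N'·ℓ(I)} φ > M^{1/8}/2. (Here I + s denotes the translate of I by s, and it is assumed all translates are contained in [-1,1).) -/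
open MeasureTheory Real Set

/-- `φ(t) = c · exp(1/(|t|-1))` (with the convention `φ(±1) = 0`). -/
noncomputable def phi (c t : ℝ) : ℝ := if |t| = 1 then 0 else c * Real.exp (1 / (|t| - 1))


lemma phi_nonneg (c t : ℝ) (hc : 0 ≤ c) : 0 ≤ phi c t := by
  unfold phi
  split
  · exact le_refl 0
  · positivity

lemma phi_eq (c t : ℝ) (ht1 : -1 < t) (ht2 : t ≤ 0) :
    phi c t = c * Real.exp (-(1/(t+1))) := by
  have habs : |t| = -t := abs_of_nonpos ht2
  have hne : |t| ≠ 1 := by rw [habs]; intro h; linarith [neg_eq_iff_eq_neg.mp h]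
  unfold phi
  rw [if_neg hne, habs]
  congr 1
  rw [show -t - 1 = -(t+1) by ring, div_neg]

lemma phi_eq_pos (c t : ℝ) (ht0 : 0 ≤ t) (ht1 : t < 1) :
    phi c t = c * Real.exp (-(1/(1-t))) := by
  have habs : |t| = t := abs_of_nonneg ht0
  have hne : |t| ≠ 1 := by rw [habs]; linarith
  unfold phi
  rw [if_neg hne, habs]
  congr 1
  rw [show t - 1 = -(1-t) by ring, div_neg]

lemma phi_pos (c t : ℝ) (hc : 0 < c) (ht : |t| < 1) : 0 < phi c t := by
  unfold phi
  rw [if_neg (by intro h; rw [h] at ht; exact lt_irrefl 1 ht)]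
  positivity

lemma phi_mono (c s t : ℝ) (hc : 0 ≤ c) (hs : -1 ≤ s) (hst : s ≤ t) (ht : t ≤ 0) :
    phi c s ≤ phi c t := by
  rcases eq_or_lt_of_le hs with h | h
  · have : phi c s = 0 := by
      unfold phi
      rw [if_pos (by rw [← h]; norm_num)]
    rw [this]; exact phi_nonneg c t hc
  · rw [phi_eq c s h (le_trans hst ht), phi_eq c t (lt_of_lt_of_le h hst) ht]
    apply mul_le_mul_of_nonneg_left _ hc
    apply Real.exp_le_exp.2
    have h1 : (0:ℝ) < s + 1 := by linarith
    have := one_div_le_one_div_of_le h1 (by linarith : s + 1 ≤ t + 1)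
    linarith

lemma phi_measurable (c : ℝ) : Measurable (phi c) := by
  unfold phi
  apply Measurable.ite
  · exact measurableSet_eq_fun measurable_abs measurable_const
  · exact measurable_const
  · exact (measurable_const.mul ((measurable_const.div (measurable_abs.sub measurable_const)).exp))

lemma phi_integrable (c p q : ℝ) (hc : 0 ≤ c) (hp : -1 ≤ p) (hpq : p ≤ q) (hq : q ≤ 1) :
    IntervalIntegrable (phi c) volume p q := by
  rw [intervalIntegrable_iff]
  apply Measure.integrableOn_of_bounded (M := c)
  · exact measure_Ioc_lt_top.ne
  · exact (phi_measurable c).aestronglyMeasurable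
  · filter_upwards [ae_restrict_mem measurableSet_uIoc] with t ht
    have h1 : -1 ≤ t := le_trans (le_min hp (by linarith)) ht.1.le
    have h2 : t ≤ 1 := le_trans ht.2 (max_le (by linarith) hq)
    have habs : |t| ≤ 1 := abs_le.2 ⟨h1, h2⟩
    rw [Real.norm_eq_abs, abs_of_nonneg (phi_nonneg c t hc)]
    unfold phi
    split
    · exact hc
    · rename_i hne
      have hlt : |t| - 1 < 0 := lt_of_le_of_ne (by linarith) (by intro h; apply hne; linarith)
      calc c * Real.exp (1/(|t|-1)) ≤ c * 1 := by
            apply mul_le_mul_of_nonneg_left _ hc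
            apply Real.exp_le_one_iff.2
            apply div_nonpos_of_nonneg_of_nonpos <;> linarith
        _ = c := mul_one c

lemma phi_integral_pos (c p q : ℝ) (hc : 0 < c) (hp : -1 ≤ p) (hpq : p < q) (hq : q ≤ 1) :
    0 < ∫ t in p..q, phi c t := by
  apply intervalIntegral.intervalIntegral_pos_of_pos_on
    (phi_integrable c p q hc.le hp hpq.le hq) _ hpq
  intro x hx
  exact phi_pos c x hc (abs_lt.2 ⟨by linarith [hx.1], by linarith [hx.2]⟩)

lemma phi_int_le (c p L : ℝ) (hc : 0 ≤ c) (hp : -1 ≤ p) (hL : 0 ≤ L) (h0 : p + L ≤ 0) :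
    ∫ t in p..(p+L), phi c t ≤ L * phi c (p+L) := by
  have h := intervalIntegral.integral_mono_on (μ := volume) (a := p) (b := p + L)
    (f := phi c) (g := fun _ => phi c (p+L)) (by linarith)
    (phi_integrable c p (p+L) hc hp (by linarith) (by linarith))
    intervalIntegrable_const
    (fun x hx => phi_mono c x (p+L) hc (by linarith [hx.1]) hx.2 h0)
  rw [intervalIntegral.integral_const, smul_eq_mul] at h
  calc ∫ t in p..(p+L), phi c t ≤ (p + L - p) * phi c (p+L) := h
    _ = L * phi c (p+L) := by ring_nf

lemma phi_le_int (c p L : ℝ) (hc : 0 ≤ c) (hp : -1 ≤ p) (hL : 0 ≤ L) (h0 : p + L ≤ 0) :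
    L/2 * phi c (p + L/2) ≤ ∫ t in p..(p+L), phi c t := by
  have h1 : 0 ≤ ∫ t in p..(p+L/2), phi c t :=
    intervalIntegral.integral_nonneg (by linarith) (fun x _ => phi_nonneg c x hc)
  have h2 : L/2 * phi c (p + L/2) ≤ ∫ t in (p+L/2)..(p+L), phi c t := by
    have h := intervalIntegral.integral_mono_on (μ := volume) (a := p + L/2) (b := p + L)
      (f := fun _ => phi c (p+L/2)) (g := phi c) (by linarith)
      intervalIntegrable_const
      (phi_integrable c (p+L/2) (p+L) hc (by linarith) (by linarith) (by linarith))
      (fun x hx => phi_mono c (p+L/2) x hc (by linarith) hx.1 (by linarith [hx.2]))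
    rw [intervalIntegral.integral_const, smul_eq_mul] at h
    calc L/2 * phi c (p + L/2) = (p + L - (p + L/2)) * phi c (p+L/2) := by ring_nf
      _ ≤ _ := h
  have h3 : (∫ t in p..(p+L/2), phi c t) + ∫ t in (p+L/2)..(p+L), phi c t
      = ∫ t in p..(p+L), phi c t :=
    intervalIntegral.integral_add_adjacent_intervals
      (phi_integrable c p (p+L/2) hc hp (by linarith) (by linarith))
      (phi_integrable c (p+L/2) (p+L) hc (by linarith) (by linarith) (by linarith))
  linarith

set_option maxHeartbeats 1000000 in

lemma core (M a L n r : ℝ) (h256 : 256 ≤ M) (ha : -1 ≤ a) (hL : 0 < L)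
    (hn : 0 ≤ n) (hr : 0 ≤ r) (hrn : r ≤ n)
    (hl : L ≤ 1/(2*(3*n+6)^2*(Real.log M/8 + 1)))
    (hhyp : Real.log M < Real.log 2 + (1/(a+L/2+1) - 1/(a+2*L+1))) :
    Real.log M / 8 < 1/(a+(r+1)*L+1) - 1/(a+(r+3/2)*L+1) := by
  set m := Real.log M with hm_def
  have hm : 0 < m := Real.log_pos (by linarith)
  have hx : 0 ≤ a + 1 := by linarith
  have hlog2 : Real.log 2 ≤ m / 8 := by
    have h1 : Real.log 256 ≤ m := Real.log_le_log (by norm_num) h256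
    have h2 : Real.log 256 = 8 * Real.log 2 := by
      rw [show (256:ℝ) = 2^(8:ℕ) by norm_num, Real.log_pow]
      push_cast; ring
    linarith
  set x := a + 1 with hx_def
  have hP : 0 < x + L/2 := by linarith
  have hQ : 0 < x + 2*L := by linarith
  have hU : 0 < x + (r+1)*L := by nlinarith
  have hV : 0 < x + (r+3/2)*L := by nlinarith
  have hD : 1/(a+L/2+1) - 1/(a+2*L+1) = (3/2*L)/((x+L/2)*(x+2*L)) := by
    rw [show a+L/2+1 = x+L/2 by rw [hx_def]; ring, show a+2*L+1 = x+2*L by rw [hx_def]; ring]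
    field_simp; ring
  have hE : 1/(a+(r+1)*L+1) - 1/(a+(r+3/2)*L+1) = (L/2)/((x+(r+1)*L)*(x+(r+3/2)*L)) := by
    rw [show a+(r+1)*L+1 = x+(r+1)*L by rw [hx_def]; ring,
        show a+(r+3/2)*L+1 = x+(r+3/2)*L by rw [hx_def]; ring]
    field_simp; ring
  rw [hE]
  rw [hD] at hhyp
  have hUV : 0 < (x+(r+1)*L)*(x+(r+3/2)*L) := mul_pos hU hV
  rw [lt_div_iff₀ hUV]
  have h78 : m * (7/8) < (3/2*L)/((x+L/2)*(x+2*L)) := by linarith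
  have h78' : m * (7/8) * ((x+L/2)*(x+2*L)) < 3/2*L := by
    have := (lt_div_iff₀ (mul_pos hP hQ)).mp h78
    linarith
  have hr0 : (r+1)*L ≤ (n+2)*L := mul_le_mul_of_nonneg_right (by linarith) hL.le
  have hr2 : (r+3/2)*L ≤ (n+2)*L := mul_le_mul_of_nonneg_right (by linarith) hL.le
  have hdbl : (2*n+4)*L = 2*((n+2)*L) := by ring
  rcases le_or_gt ((2*n+4)*L) x with hcase | hcase
  · -- x large
    have hx2 : x^2 ≤ (x+L/2)*(x+2*L) := by nlinarith
    have hU3 : x+(r+1)*L ≤ 3/2*x := by linarith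
    have hV3 : x+(r+3/2)*L ≤ 3/2*x := by linarith
    have hUV9 : (x+(r+1)*L)*(x+(r+3/2)*L) ≤ 9/4*x^2 := by
      nlinarith [mul_le_mul hU3 hV3 hV.le (show (0:ℝ) ≤ 3/2*x by linarith)]
    have h1 : m * (7/8) * x^2 < 3/2*L := by
      nlinarith [mul_le_mul_of_nonneg_left hx2 (show (0:ℝ) ≤ m*(7/8) by linarith)]
    have h2 : m/8 * ((x+(r+1)*L)*(x+(r+3/2)*L)) ≤ m/8 * (9/4*x^2) :=
      mul_le_mul_of_nonneg_left hUV9 (by linarith)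
    nlinarith [h1, h2]
  · -- x small
    set β := 3*n+6 with hβ_def
    have hβ : 0 < β := by rw [hβ_def]; linarith
    have hid : (2*n+4)*L + (n+2)*L = β*L := by rw [hβ_def]; ring
    have hUβ : x+(r+1)*L < β*L := by linarith
    have hVβ : x+(r+3/2)*L < β*L := by linarith
    have hUVβ : (x+(r+1)*L)*(x+(r+3/2)*L) < β^2*L^2 := by
      nlinarith [mul_lt_mul'' hUβ hVβ hU.le hV.le]
    have h3 : L * (2*β^2*(m/8 + 1)) ≤ 1 := by
      have hpos : 0 < 2*β^2*(m/8+1) := by nlinarith [sq_nonneg β, mul_pos hβ hβ, sq_abs β]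
      exact (le_div_iff₀ hpos).mp hl
    have h4 : L^2*β^2*(m/8+1) ≤ L/2 := by
      nlinarith [mul_le_mul_of_nonneg_left h3 (show (0:ℝ) ≤ L/2 by linarith)]
    have h5 : m/8 * ((x+(r+1)*L)*(x+(r+3/2)*L)) < m/8 * (β^2*L^2) :=
      mul_lt_mul_of_pos_left hUVβ (by linarith)
    have h6 : 0 < L^2*β^2 := by nlinarith [mul_pos hβ hβ, mul_pos hL hL]
    linarith [h4, h5, h6]

lemma phi_mid (c a L : ℝ) (hc : 0 < c) (hL : 0 < L) (hL6 : L ≤ 1/6)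
    (ha : -1/2 ≤ a) (ha3 : a + 3*L ≤ 1) :
    ∫ t in (a+L)..(a+2*L), phi c t ≤ Real.exp (4*L) * ∫ t in a..(a+L), phi c t := by
  have hstep : ∀ u v : ℝ, u ≤ 4*L + v →
      c * Real.exp u ≤ Real.exp (4*L) * (c * Real.exp v) := by
    intro u v huv
    have h1 : Real.exp (4*L) * (c * Real.exp v) = c * Real.exp (4*L + v) := by
      rw [Real.exp_add]; ring
    rw [h1]
    exact mul_le_mul_of_nonneg_left (Real.exp_le_exp.2 huv) hc.le
  have hptw : ∀ t ∈ Icc a (a+L), phi c (t+L) ≤ Real.exp (4*L) * phi c t := by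
    intro t ht
    obtain ⟨ht1, ht2⟩ := ht
    rcases le_or_gt (t+L) 0 with h | h
    · rw [phi_eq c (t+L) (by linarith) h, phi_eq c t (by linarith) (by linarith)]
      apply hstep
      have hd1 : (0:ℝ) < t+1 := by linarith
      have hd2 : (0:ℝ) < t+L+1 := by linarith
      have key : 1/(t+1) - 1/(t+L+1) = L/((t+1)*(t+L+1)) := by
        field_simp
        try ring
      have hq : (1:ℝ)/4 ≤ (t+1)*(t+L+1) := by nlinarith
      have hbound : L/((t+1)*(t+L+1)) ≤ 4*L := by
        rw [div_le_iff₀ (by nlinarith)]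
        nlinarith
      linarith
    · rcases le_or_gt t 0 with h2 | h2
      · rw [phi_eq_pos c (t+L) h.le (by linarith), phi_eq c t (by linarith) h2]
        apply hstep
        have hd1 : (0:ℝ) < t+1 := by linarith
        have hd2 : (0:ℝ) < 1-(t+L) := by linarith
        have key : 1/(t+1) - 1/(1-(t+L)) = (-2*t-L)/((t+1)*(1-(t+L))) := by
          field_simp
          try ring
        have hq2 : (25:ℝ)/36 ≤ (t+1)*(1-(t+L)) := by nlinarith
        have hbound : (-2*t-L)/((t+1)*(1-(t+L))) ≤ 4*L := by
          rw [div_le_iff₀ (by nlinarith)]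
          nlinarith [mul_le_mul_of_nonneg_left hq2 (show (0:ℝ) ≤ 4*L by linarith)]
        linarith
      · have h3 : t + L < 1 := by linarith
        rw [phi_eq_pos c (t+L) (by linarith) h3, phi_eq_pos c t h2.le (by linarith)]
        apply hstep
        have hd2 : (0:ℝ) < 1-(t+L) := by linarith
        have := one_div_le_one_div_of_le hd2 (by linarith : 1-(t+L) ≤ 1-t)
        linarith
  have hcomp : (∫ t in a..(a+L), phi c (t+L)) = ∫ t in (a+L)..(a+2*L), phi c t := by
    rw [intervalIntegral.integral_comp_add_right (phi c) L,
      show a + L + L = a + 2*L from by ring]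
  have hint1 : IntervalIntegrable (fun t => phi c (t+L)) volume a (a+L) := by
    have h := (phi_integrable c (a+L) (a+2*L) hc.le (by linarith) (by linarith)
      (by linarith)).comp_add_right L
    rw [show a + L - L = a from by ring, show a + 2*L - L = a + L from by ring] at h
    exact h
  calc ∫ t in (a+L)..(a+2*L), phi c t = ∫ t in a..(a+L), phi c (t+L) := hcomp.symm
    _ ≤ ∫ t in a..(a+L), Real.exp (4*L) * phi c t := by
        apply intervalIntegral.integral_mono_on (by linarith) hint1
          ((phi_integrable c a (a+L) hc.le (by linarith) (by linarith) (by linarith)).const_mul _)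
          hptw
    _ = Real.exp (4*L) * ∫ t in a..(a+L), phi c t :=
        intervalIntegral.integral_const_mul _ _

set_option maxHeartbeats 1000000 in
theorem stmt5 (c : ℝ) (hc : 0 < c)
    (hnorm : ∫ t in (-1:ℝ)..1, phi c t = 1) :
    ∀ M : ℝ, 1 < M → ∀ N : ℕ,
      ∃ l : ℝ, 0 < l ∧
        ∀ a L : ℝ, 0 < L → L ≤ l →
          -- the interval `I = [a, a+L)` and all relevant translates lie in `[-1,1)`
          -1 ≤ a → a + (N + 2 : ℝ) * L ≤ 1 →
          ∀ N' : ℕ, 1 ≤ N' → N' ≤ N →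
            (∫ t in (a + L)..(a + 2 * L), phi c t) / (∫ t in a..(a + L), phi c t) > M →
            (∫ t in (a + (N' + 1 : ℝ) * L)..(a + (N' + 2 : ℝ) * L), phi c t) /
              (∫ t in (a + (N' : ℝ) * L)..(a + (N' + 1 : ℝ) * L), phi c t)
              > M ^ ((1 : ℝ) / 8) / 2 := by
  intro M hM N
  set m := Real.log M with hm_def
  have hm : 0 < m := Real.log_pos hM
  have hNc : (0:ℝ) ≤ (N:ℝ) := Nat.cast_nonneg N
  have hb2 : (0:ℝ) < 2*((N:ℝ)+2) := by linarith
  have hb3 : (0:ℝ) < 2*(3*(N:ℝ)+6)^2*(m/8+1) := by nlinarith [sq_nonneg (3*(N:ℝ)+6)]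
  refine ⟨min (m/4) (min (1/(2*((N:ℝ)+2))) (1/(2*(3*(N:ℝ)+6)^2*(m/8+1)))), ?_, ?_⟩
  · apply lt_min (by linarith)
    exact lt_min (by positivity) (by positivity)
  intro a L hL hLl ha hsum N' hN'1 hN'N hyp
  have hl1 : L ≤ m/4 := le_trans hLl (min_le_left _ _)
  have hl2 : L ≤ 1/(2*((N:ℝ)+2)) := le_trans hLl ((min_le_right _ _).trans (min_le_left _ _))
  have hl3 : L ≤ 1/(2*(3*(N:ℝ)+6)^2*(m/8+1)) :=
    le_trans hLl ((min_le_right _ _).trans (min_le_right _ _))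
  have hN1 : (1:ℝ) ≤ (N:ℝ) := by exact_mod_cast le_trans hN'1 hN'N
  have hNL0 : 0 ≤ (N:ℝ)*L := mul_nonneg hNc hL.le
  have hLNL : L ≤ (N:ℝ)*L := le_mul_of_one_le_left hL.le hN1
  have hNL : ((N:ℝ)+2)*L ≤ 1/2 := by
    rw [le_div_iff₀ hb2] at hl2
    linarith
  have hL6 : L ≤ 1/6 := by linarith
  have haL1 : a + L ≤ 1 := by linarith
  have hI0pos : 0 < ∫ t in a..(a+L), phi c t :=
    phi_integral_pos c a (a+L) hc ha (by linarith) haL1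
  have hMI : M * ∫ t in a..(a+L), phi c t < ∫ t in (a+L)..(a+2*L), phi c t :=
    (lt_div_iff₀ hI0pos).mp hyp
  set r := (N':ℝ) with hr_def
  have hr1 : (1:ℝ) ≤ r := by rw [hr_def]; exact_mod_cast hN'1
  have hrN : r ≤ (N:ℝ) := by rw [hr_def]; exact_mod_cast hN'N
  have krL : r*L ≤ (N:ℝ)*L := mul_le_mul_of_nonneg_right hrN hL.le
  have krL0 : 0 ≤ r*L := mul_nonneg (by linarith) hL.le
  have krL1 : L ≤ r*L := le_mul_of_one_le_left hL.le hr1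
  by_cases hmid : a + ((N:ℝ)+2)*L ≤ 0
  swap
  · -- middle/right region: contradiction with hyp
    exfalso
    push_neg at hmid
    have ha2 : -1/2 ≤ a := by linarith
    have ha3 : a + 3*L ≤ 1 := by linarith
    have hexp : Real.exp (4*L) ≤ M := by
      rw [← Real.exp_log (show (0:ℝ) < M by linarith)]
      exact Real.exp_le_exp.2 (by linarith)
    have h1 := phi_mid c a L hc hL hL6 ha2 ha3
    linarith [mul_le_mul_of_nonneg_right hexp hI0pos.le]
  · -- all intervals within [-1, 0]
    have hJ0pos : 0 < ∫ t in (a+r*L)..(a+(r+1)*L), phi c t :=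
      phi_integral_pos c _ _ hc (by linarith) (by linarith) (by linarith)
    have hJ1pos : 0 < ∫ t in (a+(r+1)*L)..(a+(r+2)*L), phi c t :=
      phi_integral_pos c _ _ hc (by linarith) (by linarith) (by linarith)
    show _ > M ^ ((1:ℝ)/8) / 2
    by_cases h256 : M < 256
    · -- small M : use monotonicity, ratio ≥ 1 > M^(1/8)/2
      have h2562 : ((256:ℝ))^((1:ℝ)/8) = 2 := by
        rw [show (256:ℝ) = 2^(8:ℕ) from by norm_num, ← Real.rpow_natCast 2 8,
          ← Real.rpow_mul (by norm_num : (0:ℝ) ≤ 2)]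
        norm_num
      have h18 : M^((1:ℝ)/8) < 2 := by
        calc M^((1:ℝ)/8) < (256:ℝ)^((1:ℝ)/8) :=
              Real.rpow_lt_rpow (by linarith) h256 (by norm_num)
          _ = 2 := h2562
      have hcomp : (∫ t in (a+r*L)..(a+(r+1)*L), phi c (t+L))
          = ∫ t in (a+(r+1)*L)..(a+(r+2)*L), phi c t := by
        rw [intervalIntegral.integral_comp_add_right (phi c) L,
          show a+r*L+L = a+(r+1)*L from by ring, show a+(r+1)*L+L = a+(r+2)*L from by ring]
      have hint1 : IntervalIntegrable (fun t => phi c (t+L)) volume (a+r*L) (a+(r+1)*L) := by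
        have h := (phi_integrable c (a+(r+1)*L) (a+(r+2)*L) hc.le (by linarith) (by linarith)
          (by linarith)).comp_add_right L
        rw [show a+(r+1)*L-L = a+r*L from by ring, show a+(r+2)*L-L = a+(r+1)*L from by ring] at h
        exact h
      have hmono : (∫ t in (a+r*L)..(a+(r+1)*L), phi c t)
          ≤ ∫ t in (a+(r+1)*L)..(a+(r+2)*L), phi c t := by
        rw [← hcomp]
        apply intervalIntegral.integral_mono_on (by linarith)
          (phi_integrable c _ _ hc.le (by linarith) (by linarith) (by linarith)) hint1
        intro t ht
        exact phi_mono c t (t+L) hc.le (by linarith [ht.1]) (by linarith)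
          (by linarith [ht.2])
      have hone : (1:ℝ) ≤ (∫ t in (a+(r+1)*L)..(a+(r+2)*L), phi c t)
          / ∫ t in (a+r*L)..(a+(r+1)*L), phi c t := (one_le_div hJ0pos).2 hmono
      linarith
    · push_neg at h256
      -- derive the log inequality from hyp
      have hup1 : (∫ t in (a+L)..(a+2*L), phi c t) ≤ L * phi c (a+2*L) := by
        have h := phi_int_le c (a+L) L hc.le (by linarith) hL.le (by linarith)
        rwa [show a+L+L = a+2*L from by ring] at h
      have hlow0 : L/2 * phi c (a + L/2) ≤ ∫ t in a..(a+L), phi c t :=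
        phi_le_int c a L hc.le ha hL.le (by linarith)
      have ea : phi c (a+L/2) = c * Real.exp (-(1/(a+L/2+1))) :=
        phi_eq c _ (by linarith) (by linarith)
      have eb : phi c (a+2*L) = c * Real.exp (-(1/(a+2*L+1))) :=
        phi_eq c _ (by linarith) (by linarith)
      have hApos0 : 0 < L/2 * (c * Real.exp (-(1/(a+L/2+1)))) :=
        mul_pos (by linarith) (mul_pos hc (Real.exp_pos _))
      have hchain : M * (L/2 * (c * Real.exp (-(1/(a+L/2+1))))) <
          L * (c * Real.exp (-(1/(a+2*L+1)))) := by
        rw [← ea, ← eb]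
        linarith [mul_le_mul_of_nonneg_left hlow0 (show (0:ℝ) ≤ M by linarith)]
      have hMexp : M < 2 * Real.exp (1/(a+L/2+1) - 1/(a+2*L+1)) := by
        have h1 := (lt_div_iff₀ hApos0).2 hchain
        have h2 : (L * (c * Real.exp (-(1/(a+2*L+1)))))/(L/2 * (c * Real.exp (-(1/(a+L/2+1)))))
            = 2 * Real.exp (1/(a+L/2+1) - 1/(a+2*L+1)) := by
          rw [show 1/(a+L/2+1) - 1/(a+2*L+1) = -(1/(a+2*L+1)) - -(1/(a+L/2+1)) from by ring,
            Real.exp_sub]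
          field_simp
        rw [h2] at h1
        exact h1
      have hlogM : m < Real.log 2 + (1/(a+L/2+1) - 1/(a+2*L+1)) := by
        have h1 := Real.log_lt_log (show (0:ℝ) < M by linarith) hMexp
        rwa [Real.log_mul two_ne_zero (Real.exp_ne_zero _), Real.log_exp] at h1
      have hcore := core M a L (N:ℝ) r h256 ha hL hNc (by linarith) hrN hl3 hlogM
      -- bounds for the conclusion ratio
      have hJup : (∫ t in (a+r*L)..(a+(r+1)*L), phi c t) ≤ L * phi c (a+(r+1)*L) := by
        have h := phi_int_le c (a+r*L) L hc.le (by linarith) hL.le (by linarith)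
        rwa [show a+r*L+L = a+(r+1)*L from by ring] at h
      have hJlow : L/2 * phi c (a+(r+3/2)*L) ≤ ∫ t in (a+(r+1)*L)..(a+(r+2)*L), phi c t := by
        have h := phi_le_int c (a+(r+1)*L) L hc.le (by linarith) hL.le (by linarith)
        rwa [show a+(r+1)*L+L = a+(r+2)*L from by ring,
          show a+(r+1)*L+L/2 = a+(r+3/2)*L from by ring] at h
      have eu : phi c (a+(r+1)*L) = c * Real.exp (-(1/(a+(r+1)*L+1))) :=
        phi_eq c _ (by linarith) (by linarith)
      have ev : phi c (a+(r+3/2)*L) = c * Real.exp (-(1/(a+(r+3/2)*L+1))) :=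
        phi_eq c _ (by linarith) (by linarith)
      rw [eu] at hJup
      rw [ev] at hJlow
      have hstep1 : (L/2 * (c * Real.exp (-(1/(a+(r+3/2)*L+1)))))
            / (L * (c * Real.exp (-(1/(a+(r+1)*L+1)))))
          ≤ (∫ t in (a+(r+1)*L)..(a+(r+2)*L), phi c t)
            / ∫ t in (a+r*L)..(a+(r+1)*L), phi c t :=
        div_le_div₀ hJ1pos.le hJlow hJ0pos hJup
      have hstep2 : (L/2 * (c * Real.exp (-(1/(a+(r+3/2)*L+1)))))
            / (L * (c * Real.exp (-(1/(a+(r+1)*L+1)))))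
          = Real.exp (1/(a+(r+1)*L+1) - 1/(a+(r+3/2)*L+1)) / 2 := by
        rw [show 1/(a+(r+1)*L+1) - 1/(a+(r+3/2)*L+1)
            = -(1/(a+(r+3/2)*L+1)) - -(1/(a+(r+1)*L+1)) from by ring, Real.exp_sub]
        field_simp
      have hrpow : M^((1:ℝ)/8) = Real.exp (m/8) := by
        rw [Real.rpow_def_of_pos (show (0:ℝ) < M by linarith)]
        congr 1
        rw [← hm_def]; ring
      have hfin : Real.exp (m/8) < Real.exp (1/(a+(r+1)*L+1) - 1/(a+(r+3/2)*L+1)) :=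
        Real.exp_lt_exp.2 (by linarith)
      calc M^((1:ℝ)/8)/2 = Real.exp (m/8)/2 := by rw [hrpow]
        _ < Real.exp (1/(a+(r+1)*L+1) - 1/(a+(r+3/2)*L+1))/2 := by linarith
        _ = _ := hstep2.symm
        _ ≤ _ := hstep1
end

section
/- Let μ be a finite Borel measure on ℝ, x ∈ supp μ, r_i ↘ 0, and ν a tangent measure of μ at x with μ(B(x,r_i))⁻¹·(T_{x,r_i})_♯ μ → ν weakly. If z ∈ (-1,1), 0 < 2δ < 1 - |z|, c > 0, and the pairs (B(x + r_i z, δ r_i), B(x,r_i)) and (B(x + r_i z, 2δ r_i), B(x,r_i)) are each (c, δ)- resp. (c, 2δ)-comparable for infinitely many i (meaning c⁻¹δ ≤ μ(B(x+r_i z, δ r_i))/μ(B(x,r_i)) ≤ cδ, and similarly with 2δ), then c⁻¹·δ ≤ ν(B(z,δ)) ≤ ν(U(z,2δ)) ≤ 2c·δ. -/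
open MeasureTheory Metric Set Filter Topology

/-- Weak convergence of a sequence of (locally finite) Borel measures. -/
def WeakLim {E : Type*} [TopologicalSpace E] [MeasurableSpace E]
    (μs : ℕ → Measure E) (ν : Measure E) : Prop :=
  ∀ f : C(E, ℝ), HasCompactSupport f →
    Tendsto (fun i => ∫ x, f x ∂(μs i)) atTop (nhds (∫ x, f x ∂ν))

/-- A piecewise-linear bump function: `1` on `closedBall z a`, supported in `ball z b`. -/
lemma exists_bump (z a b : ℝ) (hab : a < b) :
    ∃ f : C(ℝ, ℝ), HasCompactSupport (⇑f) ∧ (∀ y, 0 ≤ f y) ∧ (∀ y, f y ≤ 1) ∧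
      (∀ y ∈ closedBall z a, f y = 1) ∧ (∀ y, f y ≠ 0 → y ∈ ball z b) := by
  have hba : 0 < b - a := by linarith
  refine ⟨⟨fun y => min 1 (max 0 ((b - |y - z|) / (b - a))), ?_⟩, ?_, ?_, ?_, ?_, ?_⟩
  · exact continuous_const.min (continuous_const.max
      ((continuous_const.sub (continuous_id.sub continuous_const).abs).div_const _))
  · apply HasCompactSupport.intro (isCompact_closedBall z b)
    intro y hy
    simp only [mem_closedBall, Real.dist_eq, not_le] at hy
    have h1 : (b - |y - z|) / (b - a) ≤ 0 := div_nonpos_of_nonpos_of_nonneg (by linarith) hba.le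
    simp only [ContinuousMap.coe_mk]
    rw [max_eq_left h1, min_eq_right zero_le_one]
  · intro y; simp only [ContinuousMap.coe_mk]
    exact le_min zero_le_one (le_max_left _ _)
  · intro y; exact min_le_left _ _
  · intro y hy
    simp only [mem_closedBall, Real.dist_eq] at hy
    have h1 : (1 : ℝ) ≤ (b - |y - z|) / (b - a) := by
      rw [le_div_iff₀ hba]; linarith
    simp only [ContinuousMap.coe_mk]
    rw [max_eq_right (by linarith), min_eq_left h1]
  · intro y hy
    simp only [ContinuousMap.coe_mk] at hy
    by_contra hmem
    simp only [mem_ball, Real.dist_eq, not_lt] at hmem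
    have h1 : (b - |y - z|) / (b - a) ≤ 0 := div_nonpos_of_nonpos_of_nonneg (by linarith) hba.le
    exact hy (by rw [max_eq_left h1, min_eq_right zero_le_one])

/-- Integral of a bump function is sandwiched between the measures of the inner closed ball
and the outer open ball. -/
lemma bump_integral_bounds (m : Measure ℝ) [IsFiniteMeasureOnCompacts m]
    (f : C(ℝ, ℝ)) (hcs : HasCompactSupport (⇑f)) (h0 : ∀ y, 0 ≤ f y) (h1 : ∀ y, f y ≤ 1)
    (z a b : ℝ) (hone : ∀ y ∈ closedBall z a, f y = 1) (hsupp : ∀ y, f y ≠ 0 → y ∈ ball z b) :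
    (m (closedBall z a)).toReal ≤ ∫ y, f y ∂m ∧ ∫ y, f y ∂m ≤ (m (ball z b)).toReal := by
  have hint : Integrable (⇑f) m := f.continuous.integrable_of_hasCompactSupport hcs
  constructor
  · have hind : Integrable ((closedBall z a).indicator (fun _ => (1:ℝ))) m :=
      (integrable_indicator_iff measurableSet_closedBall).2
        (integrableOn_const measure_closedBall_lt_top.ne)
    have hmono : ∀ y, (closedBall z a).indicator (fun _ => (1:ℝ)) y ≤ f y := by
      intro y
      by_cases hy : y ∈ closedBall z a
      · rw [indicator_of_mem hy, hone y hy]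
      · rw [indicator_of_notMem hy]; exact h0 y
    calc (m (closedBall z a)).toReal
        = ∫ y, (closedBall z a).indicator (fun _ => (1:ℝ)) y ∂m := by
          rw [integral_indicator_const 1 measurableSet_closedBall, smul_eq_mul, mul_one, measureReal_def]
      _ ≤ ∫ y, f y ∂m := integral_mono hind hint hmono
  · have hind : Integrable ((ball z b).indicator (fun _ => (1:ℝ))) m :=
      (integrable_indicator_iff measurableSet_ball).2
        (integrableOn_const measure_ball_lt_top.ne)
    have hmono : ∀ y, f y ≤ (ball z b).indicator (fun _ => (1:ℝ)) y := by
      intro y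
      by_cases hy : y ∈ ball z b
      · rw [indicator_of_mem hy]; exact h1 y
      · rw [indicator_of_notMem hy]
        by_contra h
        push_neg at h
        exact hy (hsupp y h.ne')
    calc ∫ y, f y ∂m ≤ ∫ y, (ball z b).indicator (fun _ => (1:ℝ)) y ∂m :=
        integral_mono hint hind hmono
      _ = (m (ball z b)).toReal := by
        rw [integral_indicator_const 1 measurableSet_ball, smul_eq_mul, mul_one, measureReal_def]

lemma le_lim_of_frequently_le {u : ℕ → ℝ} {L a : ℝ}
    (hu : Tendsto u atTop (nhds L)) (h : ∃ᶠ i in atTop, a ≤ u i) : a ≤ L := by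
  by_contra hL
  push_neg at hL
  have hev : ∀ᶠ i in atTop, u i < a := hu.eventually (gt_mem_nhds hL)
  obtain ⟨i, h1, h2⟩ := (h.and_eventually hev).exists
  linarith

lemma lim_le_of_frequently_le {u : ℕ → ℝ} {L a : ℝ}
    (hu : Tendsto u atTop (nhds L)) (h : ∃ᶠ i in atTop, u i ≤ a) : L ≤ a := by
  by_contra hL
  push_neg at hL
  have hev : ∀ᶠ i in atTop, a < u i := hu.eventually (lt_mem_nhds hL)
  obtain ⟨i, h1, h2⟩ := (h.and_eventually hev).exists
  linarith

theorem stmt17 (μ ν : Measure ℝ) [IsFiniteMeasure μ] [IsLocallyFiniteMeasure ν]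
    (x : ℝ) (hx : ∀ ρ : ℝ, 0 < ρ → 0 < μ (closedBall x ρ))  -- `x ∈ supp μ`
    (r : ℕ → ℝ) (hr : ∀ i, 0 < r i) (hr0 : Tendsto r atTop (nhds 0))
    (hlim : WeakLim (fun i => (μ (closedBall x (r i)))⁻¹ •
      Measure.map (fun y => (y - x) / r i) μ) ν)
    (z : ℝ) (hz : |z| < 1) (δ : ℝ) (hδ : 0 < δ) (hδz : 2 * δ < 1 - |z|)
    (c : ℝ) (hc : 0 < c)
    (hcomp1 : ∃ᶠ i in atTop,
      c⁻¹ * δ ≤ (μ (closedBall (x + r i * z) (δ * r i))).toReal /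
          (μ (closedBall x (r i))).toReal ∧
        (μ (closedBall (x + r i * z) (δ * r i))).toReal /
          (μ (closedBall x (r i))).toReal ≤ c * δ)
    (hcomp2 : ∃ᶠ i in atTop,
      c⁻¹ * (2 * δ) ≤ (μ (closedBall (x + r i * z) (2 * δ * r i))).toReal /
          (μ (closedBall x (r i))).toReal ∧
        (μ (closedBall (x + r i * z) (2 * δ * r i))).toReal /
          (μ (closedBall x (r i))).toReal ≤ c * (2 * δ)) :
    ENNReal.ofReal (c⁻¹ * δ) ≤ ν (closedBall z δ) ∧
      ν (closedBall z δ) ≤ ν (ball z (2 * δ)) ∧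
      ν (ball z (2 * δ)) ≤ ENNReal.ofReal (2 * c * δ) := by
  set m : ℕ → Measure ℝ := fun i => (μ (closedBall x (r i)))⁻¹ •
      Measure.map (fun y => (y - x) / r i) μ with hm
  have hmeas : ∀ i, Measurable (fun y : ℝ => (y - x) / r i) := fun i =>
    ((continuous_id.sub continuous_const).div_const _).measurable
  have hμB_pos : ∀ i, 0 < μ (closedBall x (r i)) := fun i => hx _ (hr i)
  have hμB_fin : ∀ i, μ (closedBall x (r i)) ≠ ⊤ := fun i => measure_ne_top μ _
  -- the rescaled measures are finite
  haveI hfin : ∀ i, IsFiniteMeasure (m i) := by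
    intro i
    constructor
    rw [hm]
    simp only [Measure.smul_apply, smul_eq_mul]
    rw [Measure.map_apply (hmeas i) MeasurableSet.univ, preimage_univ]
    exact ENNReal.mul_lt_top (ENNReal.inv_lt_top.2 (hμB_pos i)) (measure_lt_top μ _)
  -- key identity
  have hkey : ∀ i (ρ : ℝ), (m i (closedBall z ρ)).toReal =
      (μ (closedBall (x + r i * z) (ρ * r i))).toReal / (μ (closedBall x (r i))).toReal := by
    intro i ρ
    have hpre : (fun y : ℝ => (y - x) / r i) ⁻¹' closedBall z ρ
        = closedBall (x + r i * z) (ρ * r i) := by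
      ext y
      simp only [mem_preimage, mem_closedBall, Real.dist_eq]
      have heq : (y - x) / r i - z = (y - (x + r i * z)) / r i := by
        rw [eq_div_iff (hr i).ne', sub_mul, div_mul_cancel₀ _ (hr i).ne']
        ring
      rw [heq, abs_div, abs_of_pos (hr i), div_le_iff₀ (hr i)]
    have h1 : m i (closedBall z ρ) = (μ (closedBall x (r i)))⁻¹ *
        μ (closedBall (x + r i * z) (ρ * r i)) := by
      rw [hm]
      simp only [Measure.smul_apply, smul_eq_mul]
      rw [Measure.map_apply (hmeas i) measurableSet_closedBall, hpre]
    rw [h1, ENNReal.toReal_mul, ENNReal.toReal_inv, inv_mul_eq_div]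
  -- lower bound
  have hlower : ENNReal.ofReal (c⁻¹ * δ) ≤ ν (closedBall z δ) := by
    have hstep : ∀ ε : ℝ, 0 < ε → ENNReal.ofReal (c⁻¹ * δ) ≤ ν (ball z (δ + ε)) := by
      intro ε hε
      obtain ⟨f, hcs, h0, h1, hone, hsupp⟩ := exists_bump z δ (δ + ε) (by linarith)
      have hten := hlim f hcs
      have hfreq : ∃ᶠ i in atTop, c⁻¹ * δ ≤ ∫ y, f y ∂(m i) := by
        refine hcomp1.mono ?_
        intro i ⟨hi1, _⟩
        refine le_trans ?_ (bump_integral_bounds (m i) f hcs h0 h1 z δ (δ + ε) hone hsupp).1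
        rw [hkey i δ]; exact hi1
      have hle : c⁻¹ * δ ≤ ∫ y, f y ∂ν := le_lim_of_frequently_le hten hfreq
      have hle2 : ∫ y, f y ∂ν ≤ (ν (ball z (δ + ε))).toReal :=
        (bump_integral_bounds ν f hcs h0 h1 z δ (δ + ε) hone hsupp).2
      calc ENNReal.ofReal (c⁻¹ * δ) ≤ ENNReal.ofReal ((ν (ball z (δ + ε))).toReal) :=
            ENNReal.ofReal_le_ofReal (le_trans hle hle2)
        _ = ν (ball z (δ + ε)) := ENNReal.ofReal_toReal measure_ball_lt_top.ne
    -- pass to the limit ε → 0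
    set s : ℕ → Set ℝ := fun n => ball z (δ + 1 / (n + 1)) with hs
    have hanti : Antitone s := by
      intro p q hpq
      apply ball_subset_ball
      have hpq' : (p : ℝ) + 1 ≤ (q : ℝ) + 1 := by exact_mod_cast Nat.succ_le_succ hpq
      have : (1 : ℝ) / ((q : ℝ) + 1) ≤ 1 / ((p : ℝ) + 1) :=
        one_div_le_one_div_of_le (by positivity) hpq'
      linarith
    have hiInter : ⋂ n, s n = closedBall z δ := by
      apply Subset.antisymm
      · intro y hy
        simp only [hs, mem_iInter, mem_ball] at hy
        simp only [mem_closedBall]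
        by_contra h
        push_neg at h
        obtain ⟨n, hn⟩ := exists_nat_one_div_lt (show (0:ℝ) < dist y z - δ by linarith)
        have := hy n
        linarith
      · intro y hy
        simp only [hs, mem_iInter, mem_ball]
        intro n
        simp only [mem_closedBall] at hy
        have : (0:ℝ) < 1 / ((n:ℝ) + 1) := by positivity
        linarith
    have hten : Tendsto (ν ∘ s) atTop (nhds (ν (closedBall z δ))) := by
      rw [← hiInter]
      exact tendsto_measure_iInter_atTop (fun n => measurableSet_ball.nullMeasurableSet)
        hanti ⟨0, measure_ball_lt_top.ne⟩
    exact ge_of_tendsto' hten (fun n => hstep _ (by positivity))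
  -- upper bound
  have hupper : ν (ball z (2 * δ)) ≤ ENNReal.ofReal (2 * c * δ) := by
    have hstep : ∀ ε : ℝ, 0 < ε → ε < 2 * δ →
        ν (closedBall z (2 * δ - ε)) ≤ ENNReal.ofReal (2 * c * δ) := by
      intro ε hε hε2
      obtain ⟨f, hcs, h0, h1, hone, hsupp⟩ :=
        exists_bump z (2 * δ - ε) (2 * δ) (by linarith)
      have hten := hlim f hcs
      have hfreq : ∃ᶠ i in atTop, ∫ y, f y ∂(m i) ≤ c * (2 * δ) := by
        refine hcomp2.mono ?_
        intro i ⟨_, hi2⟩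
        refine le_trans (bump_integral_bounds (m i) f hcs h0 h1 z (2*δ-ε) (2*δ) hone hsupp).2 ?_
        rw [← hkey i (2*δ)] at hi2
        refine le_trans ?_ hi2
        exact ENNReal.toReal_mono (measure_ne_top _ _) (measure_mono ball_subset_closedBall)
      have hle : ∫ y, f y ∂ν ≤ c * (2 * δ) := lim_le_of_frequently_le hten hfreq
      have hle2 : (ν (closedBall z (2 * δ - ε))).toReal ≤ ∫ y, f y ∂ν :=
        (bump_integral_bounds ν f hcs h0 h1 z (2*δ-ε) (2*δ) hone hsupp).1
      calc ν (closedBall z (2 * δ - ε))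
          = ENNReal.ofReal ((ν (closedBall z (2 * δ - ε))).toReal) :=
            (ENNReal.ofReal_toReal measure_closedBall_lt_top.ne).symm
        _ ≤ ENNReal.ofReal (2 * c * δ) :=
            ENNReal.ofReal_le_ofReal (by nlinarith [le_trans hle2 hle])
    set s : ℕ → Set ℝ := fun n => closedBall z (2 * δ - δ / (n + 1)) with hs
    have hmono : Monotone s := by
      intro p q hpq
      apply closedBall_subset_closedBall
      have hpq' : (p : ℝ) + 1 ≤ (q : ℝ) + 1 := by exact_mod_cast Nat.succ_le_succ hpq
      have : δ / ((q : ℝ) + 1) ≤ δ / ((p : ℝ) + 1) := by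
        apply div_le_div_of_nonneg_left hδ.le (by positivity) hpq'
      linarith
    have hiUnion : ⋃ n, s n = ball z (2 * δ) := by
      apply Subset.antisymm
      · intro y hy
        simp only [hs, mem_iUnion, mem_closedBall] at hy
        obtain ⟨n, hn⟩ := hy
        simp only [mem_ball]
        have : (0:ℝ) < δ / ((n:ℝ) + 1) := by positivity
        linarith
      · intro y hy
        simp only [mem_ball] at hy
        obtain ⟨n, hn⟩ := exists_nat_one_div_lt
          (div_pos (show (0:ℝ) < 2 * δ - dist y z by linarith) hδ)
        simp only [hs, mem_iUnion, mem_closedBall]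
        refine ⟨n, ?_⟩
        rw [div_lt_div_iff₀ (by positivity) hδ] at hn
        have h2 : δ / ((n:ℝ) + 1) < 2 * δ - dist y z := by
          rw [div_lt_iff₀ (by positivity)]
          nlinarith
        linarith
    have hten : Tendsto (ν ∘ s) atTop (nhds (ν (ball z (2 * δ)))) := by
      rw [← hiUnion]
      exact tendsto_measure_iUnion_atTop hmono
    refine le_of_tendsto' hten (fun n => hstep _ (by positivity) ?_)
    have hn1 : (1:ℝ) ≤ (n:ℝ) + 1 := by
      have : (0:ℝ) ≤ (n:ℝ) := Nat.cast_nonneg n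
      linarith
    have : δ / ((n:ℝ) + 1) ≤ δ / 1 := div_le_div_of_nonneg_left hδ.le one_pos hn1
    rw [div_one] at this
    linarith
  exact ⟨hlower, measure_mono (closedBall_subset_ball (by linarith)), hupper⟩
end
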